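/- Let μ be a Borel probability measure on ℝ² with first marginal μ⁽¹⁾ = μ ∘ π₁⁻¹ where π₁(s,t) = s. Then for every z ∈ ℂ with Im z ≠ 0, every m > 0, and every λ ∈ ℂ \ ℝ, one has |λ G_μ(z,λ) − G_{μ⁽¹⁾}(z)| ≤ m/(|Im z||Im λ|) + (α_λ + 1)/|Im z| · μ({(s,t) : |t| > m}), where α_λ = √(1 + (Re λ/Im λ)²). -/

import Mathlib

open MeasureTheory Complex

lemma aux_norm_inv_le (z : ℂ) (hz : z.im ≠ 0) (s : ℝ) : ‖(z - s)⁻¹‖ ≤ |z.im|⁻¹ := by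
  rw [norm_inv]
  apply inv_anti₀ (abs_pos.2 hz)
  simpa using Complex.abs_im_le_norm (z - s)

lemma aux_sqrt_eq (z : ℂ) (hz : z.im ≠ 0) :
    Real.sqrt (1 + (z.re / z.im) ^ 2) = ‖z‖ / |z.im| := by
  rw [Complex.norm_def, Complex.normSq_apply, ← Real.sqrt_sq_eq_abs,
    ← Real.sqrt_div (add_nonneg (mul_self_nonneg _) (mul_self_nonneg _))]
  congr 1
  field_simp
  ring

theorem marginal_cauchy_estimate (μ : Measure (ℝ × ℝ)) [IsProbabilityMeasure μ]
    (z lam : ℂ) (m : ℝ) (hz : z.im ≠ 0) (hlam : lam.im ≠ 0) (hm : 0 < m) :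
    ‖lam * (∫ p : ℝ × ℝ, ((z - (p.1 : ℂ)) * (lam - (p.2 : ℂ)))⁻¹ ∂μ) -
        ∫ x : ℝ, (z - (x : ℂ))⁻¹ ∂(μ.map Prod.fst)‖ ≤
      m / (|z.im| * |lam.im|) +
        (Real.sqrt (1 + (lam.re / lam.im) ^ 2) + 1) / |z.im| *
          (μ {p : ℝ × ℝ | m < |p.2|}).toReal := by
  set α := Real.sqrt (1 + (lam.re / lam.im) ^ 2) with hα
  have hα0 : 0 ≤ α := Real.sqrt_nonneg _
  have hzim : (0:ℝ) < |z.im| := abs_pos.2 hz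
  have hlim : (0:ℝ) < |lam.im| := abs_pos.2 hlam
  have hzs : ∀ s : ℝ, z - (s:ℂ) ≠ 0 := by
    intro s h
    exact hz (by simpa using congrArg Complex.im h)
  have hls : ∀ t : ℝ, lam - (t:ℂ) ≠ 0 := by
    intro t h
    exact hlam (by simpa using congrArg Complex.im h)
  -- continuity / measurability
  have c2' : Continuous (fun x : ℝ => (z - (x:ℂ))⁻¹) :=
    (continuous_const.sub Complex.continuous_ofReal).inv₀ hzs
  have c2 : Continuous (fun p : ℝ × ℝ => (z - (p.1:ℂ))⁻¹) := c2'.comp continuous_fst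
  have c1 : Continuous (fun p : ℝ × ℝ => ((z - (p.1:ℂ)) * (lam - (p.2:ℂ)))⁻¹) := by
    apply Continuous.inv₀
    · exact ((continuous_const.sub (Complex.continuous_ofReal.comp continuous_fst)).mul
        (continuous_const.sub (Complex.continuous_ofReal.comp continuous_snd)))
    · intro p
      exact mul_ne_zero (hzs p.1) (hls p.2)
  have i1 : Integrable (fun p : ℝ × ℝ => ((z - (p.1:ℂ)) * (lam - (p.2:ℂ)))⁻¹) μ := by
    refine Integrable.mono' (integrable_const (|z.im|⁻¹ * |lam.im|⁻¹))
      c1.aestronglyMeasurable ?_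
    filter_upwards with p
    rw [mul_inv, norm_mul]
    exact mul_le_mul (aux_norm_inv_le z hz p.1) (aux_norm_inv_le lam hlam p.2)
      (norm_nonneg _) (inv_nonneg.2 hzim.le)
  have i1' : Integrable (fun p : ℝ × ℝ => lam * ((z - (p.1:ℂ)) * (lam - (p.2:ℂ)))⁻¹) μ :=
    i1.const_mul lam
  have i2 : Integrable (fun p : ℝ × ℝ => (z - (p.1:ℂ))⁻¹) μ := by
    refine Integrable.mono' (integrable_const |z.im|⁻¹) c2.aestronglyMeasurable ?_
    filter_upwards with p
    exact aux_norm_inv_le z hz p.1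
  have hmap : (∫ x : ℝ, (z - (x : ℂ))⁻¹ ∂(μ.map Prod.fst))
      = ∫ p : ℝ × ℝ, (z - (p.1:ℂ))⁻¹ ∂μ :=
    integral_map measurable_fst.aemeasurable c2'.aestronglyMeasurable
  rw [hmap, ← integral_const_mul, ← integral_sub i1' i2]
  set S : Set (ℝ × ℝ) := {p : ℝ × ℝ | m < |p.2|} with hS
  have hSm : MeasurableSet S := measurableSet_lt measurable_const measurable_snd.abs
  set g : ℝ × ℝ → ℝ := fun p =>
    |z.im|⁻¹ * (m * |lam.im|⁻¹) + S.indicator (fun _ => |z.im|⁻¹ * (α + 1)) p with hg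
  have hgint : Integrable g μ :=
    (integrable_const _).add ((integrable_const _).indicator hSm)
  have key : ∀ p : ℝ × ℝ,
      ‖lam * ((z - (p.1:ℂ)) * (lam - (p.2:ℂ)))⁻¹ - (z - (p.1:ℂ))⁻¹‖ ≤ g p := by
    rintro ⟨s, t⟩
    have hfac : lam * ((z - (s:ℂ)) * (lam - (t:ℂ)))⁻¹ - (z - (s:ℂ))⁻¹
        = (z - (s:ℂ))⁻¹ * (lam * (lam - (t:ℂ))⁻¹ - 1) := by
      rw [mul_inv]; ring
    rw [hfac, norm_mul]
    by_cases hp : m < |t|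
    · -- tail region: use α + 1 bound
      have hb : ‖lam * (lam - (t:ℂ))⁻¹ - 1‖ ≤ α + 1 := by
        refine (norm_sub_le _ _).trans ?_
        rw [norm_mul, norm_one]
        gcongr
        calc ‖lam‖ * ‖(lam - (t:ℂ))⁻¹‖ ≤ ‖lam‖ * |lam.im|⁻¹ :=
              mul_le_mul_of_nonneg_left (aux_norm_inv_le lam hlam t) (norm_nonneg _)
          _ = α := by
              rw [hα, aux_sqrt_eq lam hlam, div_eq_mul_inv]
      have hmem : (⟨s, t⟩ : ℝ × ℝ) ∈ S := hp
      have : g (s, t) = |z.im|⁻¹ * (m * |lam.im|⁻¹) + |z.im|⁻¹ * (α + 1) := by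
        rw [hg]; simp [Set.indicator_of_mem hmem]
      rw [this]
      have h1 : ‖(z - (s:ℂ))⁻¹‖ * ‖lam * (lam - (t:ℂ))⁻¹ - 1‖ ≤ |z.im|⁻¹ * (α + 1) :=
        mul_le_mul (aux_norm_inv_le z hz s) hb (norm_nonneg _) (inv_nonneg.2 hzim.le)
      have h0 : (0:ℝ) ≤ |z.im|⁻¹ * (m * |lam.im|⁻¹) := by positivity
      linarith
    · -- bulk region: use m / |Im lam| bound
      have ht : |t| ≤ m := not_lt.1 hp
      have h2 : lam * (lam - (t:ℂ))⁻¹ - 1 = (t:ℂ) * (lam - (t:ℂ))⁻¹ := by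
        field_simp
        rw [div_sub_one (hls t)]
        congr 1
        ring
      have hb : ‖lam * (lam - (t:ℂ))⁻¹ - 1‖ ≤ m * |lam.im|⁻¹ := by
        rw [h2, norm_mul, Complex.norm_real, Real.norm_eq_abs]
        exact mul_le_mul ht (aux_norm_inv_le lam hlam t) (norm_nonneg _)
          (le_trans (abs_nonneg t) ht)
      have hmem : (⟨s, t⟩ : ℝ × ℝ) ∉ S := hp
      have : g (s, t) = |z.im|⁻¹ * (m * |lam.im|⁻¹) := by
        rw [hg]; simp [Set.indicator_of_notMem hmem]
      rw [this]
      exact mul_le_mul (aux_norm_inv_le z hz s) hb (norm_nonneg _) (inv_nonneg.2 hzim.le)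
  calc ‖∫ p : ℝ × ℝ, (lam * ((z - (p.1:ℂ)) * (lam - (p.2:ℂ)))⁻¹ - (z - (p.1:ℂ))⁻¹) ∂μ‖
      ≤ ∫ p : ℝ × ℝ, ‖lam * ((z - (p.1:ℂ)) * (lam - (p.2:ℂ)))⁻¹ - (z - (p.1:ℂ))⁻¹‖ ∂μ :=
        norm_integral_le_integral_norm _
    _ ≤ ∫ p : ℝ × ℝ, g p ∂μ := integral_mono (i1'.sub i2).norm hgint key
    _ = |z.im|⁻¹ * (m * |lam.im|⁻¹) + (μ S).toReal * (|z.im|⁻¹ * (α + 1)) := by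
        rw [hg, integral_add (integrable_const _) ((integrable_const _).indicator hSm),
          integral_const, integral_indicator_const _ hSm]
        simp [measure_univ, Measure.real]
    _ = m / (|z.im| * |lam.im|) + (α + 1) / |z.im| * (μ S).toReal := by
        field_simp
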